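/- Let I be an inverse sequence of abelian groups over ω in which every bonding map p_k : I_{k+1} → I_k is surjective with divisible kernel, each I_k is divisible, and for each x ∈ I_{k+1}, y ∈ I_k, m ∈ ℤ with m·y = p_k(x) there is z ∈ I_{k+1} with m·z = x and p_k(z) = y. Then for every abelian group monomorphism situation over ω-indexed inverse sequences — i.e., whenever G, H are inverse sequences over ω, ψ : G → H is a levelwise-injective morphism of inverse sequences, and φ : G → I is a morphism — there exists a morphism φ̄ : H → I of inverse sequences with φ̄ ∘ ψ = φ. (I is an injective object in Ab^{ω^op}.) -/
import Mathlib


universe u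

/-- A group in which every element is divisible by every positive natural satisfies
Baer's criterion over `ℤ`. -/
theorem baer_of_nat_div {T : Type u} [AddCommGroup T]
    (h : ∀ (x : T) (d : ℕ), 0 < d → ∃ y, d • y = x) : Module.Baer ℤ T := by
  have hNat : DivisibleBy T ℕ :=
    { div := fun a n => if hn : n = 0 then 0 else (h a n (Nat.pos_of_ne_zero hn)).choose
      div_zero := fun a => by simp
      div_cancel := fun {n} a hn => by
        simp only [dif_neg hn]
        exact (h a n (Nat.pos_of_ne_zero hn)).choose_spec }
  have hInt : DivisibleBy T ℤ := AddGroup.divisibleByIntOfDivisibleByNat T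
  exact Module.Baer.of_divisible T

/-- Extension of additive homs along an injection, for Baer target. -/
theorem ext_of_baer {A B T : Type u} [AddCommGroup A] [AddCommGroup B] [AddCommGroup T]
    (hT : Module.Baer ℤ T) (i : A →+ B) (hi : Function.Injective i) (u : A →+ T) :
    ∃ v : B →+ T, v.comp i = u :=
  hT.extension_property_addMonoidHom i hi u

/-- A section of a surjection with Baer (e.g. divisible) kernel. -/
theorem section_of_baer_ker {A B : Type u} [AddCommGroup A] [AddCommGroup B]
    (p : A →+ B) (hsurj : Function.Surjective p) (hK : Module.Baer ℤ p.ker) :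
    ∃ σ : B →+ A, ∀ b, p (σ b) = b := by
  -- retraction of A onto ker p
  obtain ⟨ρ, hρ⟩ := ext_of_baer hK p.ker.subtype (Subtype.coe_injective)
      (AddMonoidHom.id p.ker)
  have hρ' : ∀ x : p.ker, ρ (x : A) = x := fun x => DFunLike.congr_fun hρ x
  -- C = ker ρ maps isomorphically onto B under p
  set C : AddSubgroup A := ρ.ker with hC
  have hbij : Function.Bijective (p.comp C.subtype) := by
    constructor
    · intro x y hxy
      have hmem : ((x : A) - (y : A)) ∈ p.ker := by
        simp only [AddMonoidHom.mem_ker, map_sub]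
        simpa [sub_eq_zero] using hxy
      have h1 : ρ ((x : A) - (y : A)) = ⟨(x : A) - (y : A), hmem⟩ := hρ' ⟨_, hmem⟩
      have h2 : ρ ((x : A) - (y : A)) = 0 := by
        have hx : ρ (x : A) = 0 := x.2
        have hy : ρ (y : A) = 0 := y.2
        simp [map_sub, hx, hy]
      have : ((x : A) - (y : A)) = 0 := by
        have := h1.symm.trans h2
        exact congrArg Subtype.val this
      exact Subtype.ext (by rwa [sub_eq_zero] at this)
    · intro b
      obtain ⟨a, ha⟩ := hsurj b
      have hmemK : (a - ((ρ a : p.ker) : A)) ∈ C := by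
        have : ρ ((ρ a : p.ker) : A) = ρ a := hρ' (ρ a)
        simp only [hC, AddMonoidHom.mem_ker, map_sub, this, sub_self]
      refine ⟨⟨a - ((ρ a : p.ker) : A), hmemK⟩, ?_⟩
      have hker : p ((ρ a : p.ker) : A) = 0 := (ρ a).2
      simp [AddMonoidHom.comp_apply, map_sub, hker, ha]
  let e : C ≃+ B := AddEquiv.ofBijective (p.comp C.subtype) hbij
  refine ⟨C.subtype.comp e.symm.toAddMonoidHom, fun b => ?_⟩
  have : (p.comp C.subtype) (e.symm b) = b := e.apply_symm_apply b
  simpa [AddMonoidHom.comp_apply] using this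

/-- An inverse sequence of abelian groups whose bonding maps are surjective with
divisible kernel, whose groups are divisible, and which satisfies the simultaneous
division-and-lifting property, is an injective object in the category of inverse
sequences of abelian groups over `ω`: every morphism into it from a subobject
(levelwise-injective morphism source) extends. -/
theorem injective_of_divisibility_conditions
    {I : ℕ → Type u} [∀ k, AddCommGroup (I k)] (p : ∀ k, I (k + 1) →+ I k)
    (hsurj : ∀ k, Function.Surjective (p k))
    (hkerdiv : ∀ k (x : I (k + 1)), p k x = 0 → ∀ d : ℕ, 0 < d → ∃ y, p k y = 0 ∧ d • y = x)
    (hdiv : ∀ k (x : I k) (d : ℕ), 0 < d → ∃ y, d • y = x)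
    (hlift : ∀ k (x : I (k + 1)) (y : I k) (m : ℤ), m • y = p k x →
      ∃ z : I (k + 1), m • z = x ∧ p k z = y) :
    ∀ (G H : ℕ → Type u) (_ : ∀ k, AddCommGroup (G k)) (_ : ∀ k, AddCommGroup (H k))
      (q : ∀ k, G (k + 1) →+ G k) (r : ∀ k, H (k + 1) →+ H k)
      (ψ : ∀ k, G k →+ H k) (φ : ∀ k, G k →+ I k),
      (∀ k, (r k).comp (ψ (k + 1)) = (ψ k).comp (q k)) →
      (∀ k, (p k).comp (φ (k + 1)) = (φ k).comp (q k)) →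
      (∀ k, Function.Injective (ψ k)) →
      ∃ φb : ∀ k, H k →+ I k,
        (∀ k, (p k).comp (φb (k + 1)) = (φb k).comp (r k)) ∧
        (∀ k, (φb k).comp (ψ k) = φ k) := by
  intro G H _ _ q r ψ φ hcommψ hcommφ hinj
  -- each I k is Baer
  have hBaer : ∀ k, Module.Baer ℤ (I k) := fun k => baer_of_nat_div (hdiv k)
  -- each kernel is Baer
  have hKerBaer : ∀ k, Module.Baer ℤ ((p k).ker) := by
    intro k
    apply baer_of_nat_div
    rintro ⟨x, hx⟩ d hd
    obtain ⟨y, hy0, hyd⟩ := hkerdiv k x hx d hd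
    exact ⟨⟨y, hy0⟩, Subtype.ext (by simpa using hyd)⟩
  -- sections of the bonding maps
  have hσ : ∀ k, ∃ σ : I k →+ I (k + 1), ∀ b, p k (σ b) = b := fun k =>
    section_of_baer_ker (p k) (hsurj k) (hKerBaer k)
  -- base case
  have base : ∃ f : H 0 →+ I 0, f.comp (ψ 0) = φ 0 :=
    ext_of_baer (hBaer 0) (ψ 0) (hinj 0) (φ 0)
  -- inductive step
  have step : ∀ k (φbk : H k →+ I k), φbk.comp (ψ k) = φ k →
      ∃ φb' : H (k + 1) →+ I (k + 1),
        φb'.comp (ψ (k + 1)) = φ (k + 1) ∧ (p k).comp φb' = φbk.comp (r k) := by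
    intro k φbk hφbk
    obtain ⟨σ, hσk⟩ := hσ k
    set f : H (k + 1) →+ I k := φbk.comp (r k) with hf
    -- the correction map into the kernel
    have hu : ∀ a : G (k + 1), p k (φ (k + 1) a - σ (f (ψ (k + 1) a))) = 0 := by
      intro a
      have h1 : p k (φ (k + 1) a) = φ k (q k a) := DFunLike.congr_fun (hcommφ k) a
      have h2 : f (ψ (k + 1) a) = φ k (q k a) := by
        have hr : r k (ψ (k + 1) a) = ψ k (q k a) := DFunLike.congr_fun (hcommψ k) a
        have hb : φbk (ψ k (q k a)) = φ k (q k a) := DFunLike.congr_fun hφbk (q k a)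
        simp [hf, AddMonoidHom.comp_apply, hr, hb]
      simp [map_sub, h1, hσk, h2]
    let u : G (k + 1) →+ (p k).ker :=
      { toFun := fun a => ⟨φ (k + 1) a - σ (f (ψ (k + 1) a)), hu a⟩
        map_zero' := by simp
        map_add' := fun a b => by
          apply Subtype.ext
          simp [map_add]
          abel }
    obtain ⟨v, hv⟩ := ext_of_baer (hKerBaer k) (ψ (k + 1)) (hinj (k + 1)) u
    refine ⟨σ.comp f + ((p k).ker.subtype.comp v), ?_, ?_⟩
    · ext a
      have hva : v (ψ (k + 1) a) = u a := DFunLike.congr_fun hv a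
      simp only [AddMonoidHom.comp_apply, AddMonoidHom.add_apply, hva]
      show σ (f (ψ (k + 1) a)) + (φ (k + 1) a - σ (f (ψ (k + 1) a))) = φ (k + 1) a
      abel
    · ext x
      have hker : p k ((v x : I (k + 1))) = 0 := (v x).2
      simp [AddMonoidHom.comp_apply, map_add, hσk, hker, hf]
  -- build the tower of extensions by recursion
  let F : ∀ k, {f : H k →+ I k // f.comp (ψ k) = φ k} :=
    fun k => Nat.rec ⟨base.choose, base.choose_spec⟩
      (fun k ih => ⟨(step k ih.1 ih.2).choose, (step k ih.1 ih.2).choose_spec.1⟩) k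
  refine ⟨fun k => (F k).1, fun k => ?_, fun k => (F k).2⟩
  exact (step k (F k).1 (F k).2).choose_spec.2
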